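/- For every odd integer Δ with Δ = 9 or Δ ≥ 11, there exists a 4-γ_t-critical graph G of order Δ + 4 with maximum degree Δ(G) = Δ and minimum degree δ(G) ≥ 2. -/

import Mathlib

set_option maxHeartbeats 1000000

open scoped Classical

namespace SimpleGraph

variable {V : Type*}

/-- A set `S` is a total dominating set if every vertex is adjacent to a vertex of `S`. -/
def IsTotalDomSet (G : SimpleGraph V) (S : Set V) : Prop :=
  ∀ v : V, ∃ u ∈ S, G.Adj v u

/-- The total domination number: minimum cardinality of a total dominating set. -/
noncomputable def totalDomNum (G : SimpleGraph V) [Fintype V] : ℕ :=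
  sInf {n : ℕ | ∃ S : Finset V, G.IsTotalDomSet ↑S ∧ S.card = n}

/-- The graph obtained by deleting the vertex `v`. -/
def deleteVert (G : SimpleGraph V) (v : V) : SimpleGraph {u : V // u ≠ v} :=
  G.induce {u : V | u ≠ v}

/-- A support vertex is a vertex adjacent to a leaf (a vertex of degree one). -/
noncomputable def IsSupportVertex (G : SimpleGraph V) [Fintype V] (v : V) : Prop :=
  ∃ u : V, G.Adj v u ∧ G.degree u = 1

/-- `G` is total domination vertex critical: it has no isolated vertex and deleting any
vertex that is not a support vertex decreases the total domination number. -/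
noncomputable def IsTotalDomCritical (G : SimpleGraph V) [Fintype V] : Prop :=
  (∀ v : V, 0 < G.degree v) ∧
  ∀ v : V, ¬ G.IsSupportVertex v →
    (G.deleteVert v).totalDomNum < G.totalDomNum

/-! ### Auxiliary construction

For odd `Δ ≥ 9`, set `n = Δ + 4`.  We build a graph on `Fin n` with the
following structure (codes): `0 = h` (hub), `1 = p`, `2 = q`, `3 = r`,
`4 = s₁`, `5 = s₂`, `6 = t₁`, `7 = t₂`, `8 = t₃`, and for `9 ≤ v < n` the
"generic" vertices: odd codes are x-vertices, even codes are y-vertices,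
with partner pairs `(v, v+1)` for odd `v`. -/

def FF (u v : ℕ) : Prop :=
  (u = 0 ∧ 4 ≤ v) ∨
  (u = 1 ∧ (v = 2 ∨ v = 4 ∨ v = 5 ∨ (9 ≤ v ∧ v % 2 = 1))) ∨
  (u = 2 ∧ (v = 1 ∨ v = 3)) ∨
  (u = 3 ∧ (v = 2 ∨ v = 6 ∨ v = 7 ∨ v = 8 ∨ (9 ≤ v ∧ v % 2 = 0))) ∨
  (u = 4 ∧ (v = 0 ∨ v = 1 ∨ v = 7 ∨ (9 ≤ v ∧ v % 2 = 0))) ∨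
  (u = 5 ∧ (v = 0 ∨ v = 1 ∨ v = 6 ∨ (9 ≤ v ∧ v % 2 = 0))) ∨
  (u = 6 ∧ (v = 0 ∨ v = 3 ∨ v = 5 ∨ v = 7 ∨ (9 ≤ v ∧ v % 2 = 1))) ∨
  (u = 7 ∧ (v = 0 ∨ v = 3 ∨ v = 4 ∨ v = 6 ∨ (9 ≤ v ∧ v % 2 = 1))) ∨
  (u = 8 ∧ (v = 0 ∨ v = 3 ∨ (9 ≤ v ∧ v % 2 = 0))) ∨
  (9 ≤ u ∧ 9 ≤ v ∧ u % 2 ≠ v % 2 ∧ ¬(v = u + 1 ∧ u % 2 = 1) ∧ ¬(u = v + 1 ∧ v % 2 = 1))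

def myG (n : ℕ) : SimpleGraph (Fin n) where
  Adj u v := u.val ≠ v.val ∧ (FF u.val v.val ∨ FF v.val u.val)
  symm := ⟨by rintro u v ⟨h1, h2⟩; exact ⟨Ne.symm h1, h2.symm⟩⟩
  loopless := ⟨fun u h => h.1 rfl⟩

lemma fin_ne_of_val {n : ℕ} (u w : Fin n) (h : u.val ≠ w.val) : u ≠ w :=
  fun e => h (congrArg Fin.val e)

lemma mem_of_val {n : ℕ} {S : Finset (Fin n)} {u : Fin n} (hu : u ∈ S) (k : ℕ) (hk : k < n)
    (h : u.val = k) : (⟨k, hk⟩ : Fin n) ∈ S := by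
  have e : u = ⟨k, hk⟩ := Fin.ext h
  exact e ▸ hu

/-- arithmetic domination condition: the vertex with code `w` is adjacent to
the vertex with code `a`. -/
def DD (w a : ℕ) : Prop := w ≠ a ∧ (FF w a ∨ FF a w)

lemma adj_of_DD {n : ℕ} (v : Fin n) (a : ℕ) (ha : a < n) (h : DD v.val a) :
    (myG n).Adj v ⟨a, ha⟩ := h

lemma dom_fact {n : ℕ} {S : Finset (Fin n)} (hS : (myG n).IsTotalDomSet ↑S)
    (k : ℕ) (hk : k < n) :
    ∃ u ∈ S, (k ≠ u.val ∧ (FF k u.val ∨ FF u.val k)) := by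
  obtain ⟨u, hu, ha⟩ := hS ⟨k, hk⟩
  exact ⟨u, Finset.mem_coe.mp hu, ha⟩

-- explicit adjacency constructors
lemma DD_0 {w : ℕ} (h : 4 ≤ w) : DD w 0 :=
  ⟨by omega, Or.inr (Or.inl ⟨rfl, h⟩)⟩

lemma DD_1 {w : ℕ} (h : w = 2 ∨ w = 4 ∨ w = 5 ∨ (9 ≤ w ∧ w % 2 = 1)) : DD w 1 :=
  ⟨by omega, Or.inr (Or.inr (Or.inl ⟨rfl, h⟩))⟩

lemma DD_2 {w : ℕ} (h : w = 1 ∨ w = 3) : DD w 2 :=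
  ⟨by omega, Or.inr (Or.inr (Or.inr (Or.inl ⟨rfl, h⟩)))⟩

lemma DD_3 {w : ℕ} (h : w = 2 ∨ w = 6 ∨ w = 7 ∨ w = 8 ∨ (9 ≤ w ∧ w % 2 = 0)) : DD w 3 :=
  ⟨by omega, Or.inr (Or.inr (Or.inr (Or.inr (Or.inl ⟨rfl, h⟩))))⟩

lemma DD_4 {w : ℕ} (h : w = 0 ∨ w = 1 ∨ w = 7 ∨ (9 ≤ w ∧ w % 2 = 0)) : DD w 4 :=
  ⟨by omega, Or.inr (Or.inr (Or.inr (Or.inr (Or.inr (Or.inl ⟨rfl, h⟩)))))⟩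

lemma DD_5 {w : ℕ} (h : w = 0 ∨ w = 1 ∨ w = 6 ∨ (9 ≤ w ∧ w % 2 = 0)) : DD w 5 :=
  ⟨by omega, Or.inr (Or.inr (Or.inr (Or.inr (Or.inr (Or.inr (Or.inl ⟨rfl, h⟩))))))⟩

lemma DD_6 {w : ℕ} (h : w = 0 ∨ w = 3 ∨ w = 5 ∨ w = 7 ∨ (9 ≤ w ∧ w % 2 = 1)) : DD w 6 :=
  ⟨by omega, Or.inr (Or.inr (Or.inr (Or.inr (Or.inr (Or.inr (Or.inr (Or.inl ⟨rfl, h⟩)))))))⟩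

lemma DD_7 {w : ℕ} (h : w = 0 ∨ w = 3 ∨ w = 4 ∨ w = 6 ∨ (9 ≤ w ∧ w % 2 = 1)) : DD w 7 :=
  ⟨by omega,
    Or.inr (Or.inr (Or.inr (Or.inr (Or.inr (Or.inr (Or.inr (Or.inr (Or.inl ⟨rfl, h⟩))))))))⟩

lemma DD_8 {w : ℕ} (h : w = 0 ∨ w = 3 ∨ (9 ≤ w ∧ w % 2 = 0)) : DD w 8 :=
  ⟨by omega,
    Or.inr (Or.inr (Or.inr (Or.inr (Or.inr (Or.inr (Or.inr (Or.inr (Or.inr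
      (Or.inl ⟨rfl, h⟩)))))))))⟩

lemma FF_gen {u v : ℕ} (h1 : 9 ≤ u) (h2 : 9 ≤ v) (h3 : u % 2 ≠ v % 2)
    (h4 : ¬(v = u + 1 ∧ u % 2 = 1)) (h5 : ¬(u = v + 1 ∧ v % 2 = 1)) : FF u v :=
  Or.inr (Or.inr (Or.inr (Or.inr (Or.inr (Or.inr (Or.inr (Or.inr (Or.inr
    ⟨h1, h2, h3, h4, h5⟩))))))))

/-- `a` is a generic x-vertex (odd ≥ 9) -/
lemma DD_odd {a w : ℕ} (ha : 9 ≤ a) (hpar : a % 2 = 1)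
    (h : w = 0 ∨ w = 1 ∨ w = 6 ∨ w = 7 ∨ (9 ≤ w ∧ w % 2 = 0 ∧ w ≠ a + 1)) : DD w a := by
  rcases h with rfl | rfl | rfl | rfl | ⟨h9, hp, hne⟩
  · exact ⟨by omega, Or.inl (Or.inl ⟨rfl, by omega⟩)⟩
  · exact ⟨by omega, Or.inl (Or.inr (Or.inl ⟨rfl, Or.inr (Or.inr (Or.inr ⟨ha, hpar⟩))⟩))⟩
  · exact ⟨by omega, Or.inl (Or.inr (Or.inr (Or.inr (Or.inr (Or.inr (Or.inr
      (Or.inl ⟨rfl, Or.inr (Or.inr (Or.inr (Or.inr ⟨ha, hpar⟩)))⟩)))))))⟩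
  · exact ⟨by omega, Or.inl (Or.inr (Or.inr (Or.inr (Or.inr (Or.inr (Or.inr (Or.inr
      (Or.inl ⟨rfl, Or.inr (Or.inr (Or.inr (Or.inr ⟨ha, hpar⟩)))⟩))))))))⟩
  · exact ⟨by omega, Or.inl (FF_gen h9 ha (by omega) (by omega) (by omega))⟩

/-- `a` is a generic y-vertex (even ≥ 9) -/
lemma DD_even {a w : ℕ} (ha : 9 ≤ a) (hpar : a % 2 = 0)
    (h : w = 0 ∨ w = 3 ∨ w = 4 ∨ w = 5 ∨ w = 8 ∨ (9 ≤ w ∧ w % 2 = 1 ∧ a ≠ w + 1)) : DD w a := by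
  rcases h with rfl | rfl | rfl | rfl | rfl | ⟨h9, hp, hne⟩
  · exact ⟨by omega, Or.inl (Or.inl ⟨rfl, by omega⟩)⟩
  · exact ⟨by omega, Or.inl (Or.inr (Or.inr (Or.inr (Or.inl
      ⟨rfl, Or.inr (Or.inr (Or.inr (Or.inr ⟨ha, hpar⟩)))⟩))))⟩
  · exact ⟨by omega, Or.inl (Or.inr (Or.inr (Or.inr (Or.inr (Or.inl
      ⟨rfl, Or.inr (Or.inr (Or.inr ⟨ha, hpar⟩))⟩)))))⟩
  · exact ⟨by omega, Or.inl (Or.inr (Or.inr (Or.inr (Or.inr (Or.inr (Or.inl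
      ⟨rfl, Or.inr (Or.inr (Or.inr ⟨ha, hpar⟩))⟩))))))⟩
  · exact ⟨by omega, Or.inl (Or.inr (Or.inr (Or.inr (Or.inr (Or.inr (Or.inr (Or.inr (Or.inr
      (Or.inl ⟨rfl, Or.inr (Or.inr ⟨ha, hpar⟩)⟩)))))))))⟩
  · exact ⟨by omega, Or.inl (FF_gen h9 ha (by omega) (by omega) (by omega))⟩

lemma card_le_three {W : Type*} [DecidableEq W] (a b c : W) :
    ({a, b, c} : Finset W).card ≤ 3 := by
  refine le_trans (Finset.card_insert_le _ _) (Nat.add_le_add_right ?_ 1)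
  refine le_trans (Finset.card_insert_le _ _) (Nat.add_le_add_right ?_ 1)
  simp

lemma card_le_four {W : Type*} [DecidableEq W] (a b c d : W) :
    ({a, b, c, d} : Finset W).card ≤ 4 := by
  refine le_trans (Finset.card_insert_le _ _) (Nat.add_le_add_right ?_ 1)
  exact card_le_three b c d

lemma four_le_card {W : Type*} [DecidableEq W] {S : Finset W} {a b c d : W}
    (ha : a ∈ S) (hb : b ∈ S) (hc : c ∈ S) (hd : d ∈ S)
    (hab : a ≠ b) (hac : a ≠ c) (had : a ≠ d) (hbc : b ≠ c) (hbd : b ≠ d) (hcd : c ≠ d) :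
    4 ≤ S.card := by
  have hsub : ({a, b, c, d} : Finset W) ⊆ S := by
    intro x hx
    simp only [Finset.mem_insert, Finset.mem_singleton] at hx
    rcases hx with rfl | rfl | rfl | rfl <;> assumption
  have hcard : ({a, b, c, d} : Finset W).card = 4 := by
    rw [Finset.card_insert_of_notMem (by simp [hab, hac, had]),
        Finset.card_insert_of_notMem (by simp [hbc, hbd]),
        Finset.card_insert_of_notMem (by simp [hcd]), Finset.card_singleton]
  calc 4 = ({a, b, c, d} : Finset W).card := hcard.symm
    _ ≤ S.card := Finset.card_le_card hsub

lemma tdn_le_card {W : Type*} [Fintype W] (G : SimpleGraph W) (S : Finset W)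
    (h : G.IsTotalDomSet ↑S) : G.totalDomNum ≤ S.card :=
  Nat.sInf_le ⟨S, h, rfl⟩

lemma wclasses (w : ℕ) : w = 0 ∨ w = 1 ∨ w = 2 ∨ w = 3 ∨ w = 4 ∨ w = 5 ∨ w = 6 ∨ w = 7 ∨
    w = 8 ∨ (9 ≤ w ∧ w % 2 = 1) ∨ (9 ≤ w ∧ w % 2 = 0) := by omega

/-! #### the lower bound: no total dominating set has fewer than 4 vertices -/

lemma main_lower {n : ℕ} (hn : 13 ≤ n) (hodd : n % 2 = 1) (S : Finset (Fin n))
    (hS : (myG n).IsTotalDomSet ↑S) : 4 ≤ S.card := by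
  by_contra hlt
  have hcard : S.card ≤ 3 := by omega
  obtain ⟨uq, huq, haq⟩ := dom_fact hS 2 (by omega)
  have huqv : uq.val = 1 ∨ uq.val = 3 := by unfold FF at haq; omega
  by_cases hp : (⟨1, by omega⟩ : Fin n) ∈ S
  · by_cases hr : (⟨3, by omega⟩ : Fin n) ∈ S
    · -- both p and r in S
      obtain ⟨uh, huh, hah⟩ := dom_fact hS 0 (by omega)
      have hhv : 4 ≤ uh.val := by unfold FF at hah; omega
      obtain ⟨up, hup, hap⟩ := dom_fact hS 1 (by omega)
      have hpv : up.val = 2 ∨ up.val = 4 ∨ up.val = 5 ∨ (9 ≤ up.val ∧ up.val % 2 = 1) := by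
        unfold FF at hap; omega
      obtain ⟨ur, hur, har⟩ := dom_fact hS 3 (by omega)
      have hrv : ur.val = 2 ∨ ur.val = 6 ∨ ur.val = 7 ∨ ur.val = 8 ∨ (9 ≤ ur.val ∧ ur.val % 2 = 0) := by
        unfold FF at har; omega
      by_cases hpr : up = ur
      · have h2 : up.val = 2 := by have := congrArg Fin.val hpr; omega
        have h4 := four_le_card hp hr hup huh
          (fin_ne_of_val _ _ (show (1:ℕ) ≠ 3 by omega))
          (fin_ne_of_val _ _ (show (1:ℕ) ≠ up.val by omega))
          (fin_ne_of_val _ _ (show (1:ℕ) ≠ uh.val by omega))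
          (fin_ne_of_val _ _ (show (3:ℕ) ≠ up.val by omega))
          (fin_ne_of_val _ _ (show (3:ℕ) ≠ uh.val by omega))
          (fin_ne_of_val _ _ (by omega))
        omega
      · have h4 := four_le_card hp hr hup hur
          (fin_ne_of_val _ _ (show (1:ℕ) ≠ 3 by omega))
          (fin_ne_of_val _ _ (show (1:ℕ) ≠ up.val by omega))
          (fin_ne_of_val _ _ (show (1:ℕ) ≠ ur.val by omega))
          (fin_ne_of_val _ _ (show (3:ℕ) ≠ up.val by omega))
          (fin_ne_of_val _ _ (show (3:ℕ) ≠ ur.val by omega))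
          hpr
        omega
    · -- p ∈ S, r ∉ S
      by_cases h0 : (⟨0, by omega⟩ : Fin n) ∈ S
      · -- h and p in S
        obtain ⟨uh, huh, hah⟩ := dom_fact hS 0 (by omega)
        have hhv : 4 ≤ uh.val := by unfold FF at hah; omega
        obtain ⟨up, hup, hap⟩ := dom_fact hS 1 (by omega)
        have hpv : up.val = 2 ∨ up.val = 4 ∨ up.val = 5 ∨ (9 ≤ up.val ∧ up.val % 2 = 1) := by
          unfold FF at hap; omega
        obtain ⟨ur, hur, har⟩ := dom_fact hS 3 (by omega)
        have hrv : ur.val = 2 ∨ ur.val = 6 ∨ ur.val = 7 ∨ ur.val = 8 ∨ (9 ≤ ur.val ∧ ur.val % 2 = 0) := by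
          unfold FF at har; omega
        by_cases hpr : up = ur
        · have h2 : up.val = 2 := by have := congrArg Fin.val hpr; omega
          have h4 := four_le_card hp h0 hup huh
            (fin_ne_of_val _ _ (show (1:ℕ) ≠ 0 by omega))
            (fin_ne_of_val _ _ (show (1:ℕ) ≠ up.val by omega))
            (fin_ne_of_val _ _ (show (1:ℕ) ≠ uh.val by omega))
            (fin_ne_of_val _ _ (show (0:ℕ) ≠ up.val by omega))
            (fin_ne_of_val _ _ (show (0:ℕ) ≠ uh.val by omega))
            (fin_ne_of_val _ _ (by omega))
          omega
        · have h4 := four_le_card hp h0 hup hur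
            (fin_ne_of_val _ _ (show (1:ℕ) ≠ 0 by omega))
            (fin_ne_of_val _ _ (show (1:ℕ) ≠ up.val by omega))
            (fin_ne_of_val _ _ (show (1:ℕ) ≠ ur.val by omega))
            (fin_ne_of_val _ _ (show (0:ℕ) ≠ up.val by omega))
            (fin_ne_of_val _ _ (show (0:ℕ) ≠ ur.val by omega))
            hpr
          omega
      · -- p ∈ S, r ∉ S, h ∉ S  (case A2)
        obtain ⟨uy, huy, hay⟩ := dom_fact hS 8 (by omega)
        have hy0 : uy.val = 0 ∨ uy.val = 3 ∨ (9 ≤ uy.val ∧ uy.val % 2 = 0) := by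
          unfold FF at hay; omega
        have hyv : 9 ≤ uy.val ∧ uy.val % 2 = 0 := by
          rcases hy0 with h | h | h
          · exact absurd (mem_of_val huy 0 (by omega) h) h0
          · exact absurd (mem_of_val huy 3 (by omega) h) hr
          · exact h
        obtain ⟨ua, hua, haa⟩ := dom_fact hS 6 (by omega)
        have ha0 : ua.val = 0 ∨ ua.val = 3 ∨ ua.val = 5 ∨ ua.val = 7 ∨ (9 ≤ ua.val ∧ ua.val % 2 = 1) := by
          unfold FF at haa; omega
        have hav : ua.val = 5 ∨ ua.val = 7 ∨ (9 ≤ ua.val ∧ ua.val % 2 = 1) := by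
          rcases ha0 with h | h | h | h | h
          · exact absurd (mem_of_val hua 0 (by omega) h) h0
          · exact absurd (mem_of_val hua 3 (by omega) h) hr
          · exact Or.inl h
          · exact Or.inr (Or.inl h)
          · exact Or.inr (Or.inr h)
        obtain ⟨ub, hub, hbb⟩ := dom_fact hS 7 (by omega)
        have hb0 : ub.val = 0 ∨ ub.val = 3 ∨ ub.val = 4 ∨ ub.val = 6 ∨ (9 ≤ ub.val ∧ ub.val % 2 = 1) := by
          unfold FF at hbb; omega
        have hbv : ub.val = 4 ∨ ub.val = 6 ∨ (9 ≤ ub.val ∧ ub.val % 2 = 1) := by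
          rcases hb0 with h | h | h | h | h
          · exact absurd (mem_of_val hub 0 (by omega) h) h0
          · exact absurd (mem_of_val hub 3 (by omega) h) hr
          · exact Or.inl h
          · exact Or.inr (Or.inl h)
          · exact Or.inr (Or.inr h)
        by_cases hab : ua = ub
        · have htv : 9 ≤ ua.val ∧ ua.val % 2 = 1 := by
            have := congrArg Fin.val hab; omega
          -- S = {p, uy, ua}
          have hsub : ({(⟨1, by omega⟩ : Fin n), uy, ua} : Finset (Fin n)) ⊆ S := by
            intro x hx
            simp only [Finset.mem_insert, Finset.mem_singleton] at hx
            rcases hx with rfl | rfl | rfl <;> assumption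
          have hc3 : ({(⟨1, by omega⟩ : Fin n), uy, ua} : Finset (Fin n)).card = 3 := by
            rw [Finset.card_insert_of_notMem, Finset.card_insert_of_notMem,
              Finset.card_singleton]
            · simp only [Finset.mem_singleton]
              exact fin_ne_of_val _ _ (by omega)
            · simp only [Finset.mem_insert, Finset.mem_singleton]
              push_neg
              exact ⟨fin_ne_of_val _ _ (show (1:ℕ) ≠ uy.val by omega),
                fin_ne_of_val _ _ (show (1:ℕ) ≠ ua.val by omega)⟩
          have hSeq : S = {(⟨1, by omega⟩ : Fin n), uy, ua} :=
            (Finset.eq_of_subset_of_card_le hsub (by omega)).symm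
          obtain ⟨u, hu, hau⟩ := dom_fact hS (ua.val + 1) (by
            have := ua.isLt; omega)
          rw [hSeq] at hu
          simp only [Finset.mem_insert, Finset.mem_singleton] at hu
          rcases hu with h | h | h
          · have : u.val = 1 := congrArg Fin.val h
            unfold FF at hau; omega
          · have : u.val = uy.val := congrArg Fin.val h
            unfold FF at hau; omega
          · have : u.val = ua.val := congrArg Fin.val h
            unfold FF at hau; omega
        · have h4 := four_le_card hp huy hua hub
            (fin_ne_of_val _ _ (show (1:ℕ) ≠ uy.val by omega))
            (fin_ne_of_val _ _ (show (1:ℕ) ≠ ua.val by omega))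
            (fin_ne_of_val _ _ (show (1:ℕ) ≠ ub.val by omega))
            (fin_ne_of_val _ _ (by omega))
            (fin_ne_of_val _ _ (by omega))
            hab
          omega
  · by_cases hr : (⟨3, by omega⟩ : Fin n) ∈ S
    · -- r ∈ S, p ∉ S
      by_cases h0 : (⟨0, by omega⟩ : Fin n) ∈ S
      · obtain ⟨uh, huh, hah⟩ := dom_fact hS 0 (by omega)
        have hhv : 4 ≤ uh.val := by unfold FF at hah; omega
        obtain ⟨up, hup, hap⟩ := dom_fact hS 1 (by omega)
        have hpv : up.val = 2 ∨ up.val = 4 ∨ up.val = 5 ∨ (9 ≤ up.val ∧ up.val % 2 = 1) := by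
          unfold FF at hap; omega
        obtain ⟨ur, hur, har⟩ := dom_fact hS 3 (by omega)
        have hrv : ur.val = 2 ∨ ur.val = 6 ∨ ur.val = 7 ∨ ur.val = 8 ∨ (9 ≤ ur.val ∧ ur.val % 2 = 0) := by
          unfold FF at har; omega
        by_cases hpr : up = ur
        · have h2 : up.val = 2 := by have := congrArg Fin.val hpr; omega
          have h4 := four_le_card hr h0 hup huh
            (fin_ne_of_val _ _ (show (3:ℕ) ≠ 0 by omega))
            (fin_ne_of_val _ _ (show (3:ℕ) ≠ up.val by omega))
            (fin_ne_of_val _ _ (show (3:ℕ) ≠ uh.val by omega))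
            (fin_ne_of_val _ _ (show (0:ℕ) ≠ up.val by omega))
            (fin_ne_of_val _ _ (show (0:ℕ) ≠ uh.val by omega))
            (fin_ne_of_val _ _ (by omega))
          omega
        · have h4 := four_le_card hr h0 hup hur
            (fin_ne_of_val _ _ (show (3:ℕ) ≠ 0 by omega))
            (fin_ne_of_val _ _ (show (3:ℕ) ≠ up.val by omega))
            (fin_ne_of_val _ _ (show (3:ℕ) ≠ ur.val by omega))
            (fin_ne_of_val _ _ (show (0:ℕ) ≠ up.val by omega))
            (fin_ne_of_val _ _ (show (0:ℕ) ≠ ur.val by omega))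
            hpr
          omega
      · -- B2 : r ∈ S, p ∉ S, h ∉ S
        obtain ⟨up, hup, hap⟩ := dom_fact hS 1 (by omega)
        have hpv : up.val = 2 ∨ up.val = 4 ∨ up.val = 5 ∨ (9 ≤ up.val ∧ up.val % 2 = 1) := by
          unfold FF at hap; omega
        obtain ⟨u1, hu1, ha1⟩ := dom_fact hS 4 (by omega)
        have h10 : u1.val = 0 ∨ u1.val = 1 ∨ u1.val = 7 ∨ (9 ≤ u1.val ∧ u1.val % 2 = 0) := by
          unfold FF at ha1; omega
        have h1v : u1.val = 7 ∨ (9 ≤ u1.val ∧ u1.val % 2 = 0) := by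
          rcases h10 with h | h | h | h
          · exact absurd (mem_of_val hu1 0 (by omega) h) h0
          · exact absurd (mem_of_val hu1 1 (by omega) h) hp
          · exact Or.inl h
          · exact Or.inr h
        obtain ⟨u2, hu2, ha2⟩ := dom_fact hS 5 (by omega)
        have h20 : u2.val = 0 ∨ u2.val = 1 ∨ u2.val = 6 ∨ (9 ≤ u2.val ∧ u2.val % 2 = 0) := by
          unfold FF at ha2; omega
        have h2v : u2.val = 6 ∨ (9 ≤ u2.val ∧ u2.val % 2 = 0) := by
          rcases h20 with h | h | h | h
          · exact absurd (mem_of_val hu2 0 (by omega) h) h0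
          · exact absurd (mem_of_val hu2 1 (by omega) h) hp
          · exact Or.inl h
          · exact Or.inr h
        by_cases h12 : u1 = u2
        · have hyv : 9 ≤ u1.val ∧ u1.val % 2 = 0 := by
            have := congrArg Fin.val h12; omega
          have hsub : ({(⟨3, by omega⟩ : Fin n), up, u1} : Finset (Fin n)) ⊆ S := by
            intro x hx
            simp only [Finset.mem_insert, Finset.mem_singleton] at hx
            rcases hx with rfl | rfl | rfl <;> assumption
          have hc3 : ({(⟨3, by omega⟩ : Fin n), up, u1} : Finset (Fin n)).card = 3 := by
            rw [Finset.card_insert_of_notMem, Finset.card_insert_of_notMem,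
              Finset.card_singleton]
            · simp only [Finset.mem_singleton]
              exact fin_ne_of_val _ _ (by omega)
            · simp only [Finset.mem_insert, Finset.mem_singleton]
              push_neg
              exact ⟨fin_ne_of_val _ _ (show (3:ℕ) ≠ up.val by omega),
                fin_ne_of_val _ _ (show (3:ℕ) ≠ u1.val by omega)⟩
          have hSeq : S = {(⟨3, by omega⟩ : Fin n), up, u1} :=
            (Finset.eq_of_subset_of_card_le hsub (by omega)).symm
          obtain ⟨w, hw⟩ : ∃ w, u1.val = w + 1 := ⟨u1.val - 1, by omega⟩
          obtain ⟨u, hu, hau⟩ := dom_fact hS w (by have := u1.isLt; omega)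
          rw [hSeq] at hu
          simp only [Finset.mem_insert, Finset.mem_singleton] at hu
          rcases hu with h | h | h
          · have : u.val = 3 := congrArg Fin.val h
            unfold FF at hau; omega
          · have : u.val = up.val := congrArg Fin.val h
            unfold FF at hau; omega
          · have : u.val = u1.val := congrArg Fin.val h
            unfold FF at hau; omega
        · have h4 := four_le_card hr hup hu1 hu2
            (fin_ne_of_val _ _ (show (3:ℕ) ≠ up.val by omega))
            (fin_ne_of_val _ _ (show (3:ℕ) ≠ u1.val by omega))
            (fin_ne_of_val _ _ (show (3:ℕ) ≠ u2.val by omega))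
            (fin_ne_of_val _ _ (by omega))
            (fin_ne_of_val _ _ (by omega))
            h12
          omega
    · -- neither p nor r in S : q undominated
      rcases huqv with h | h
      · exact hp (mem_of_val huq 1 (by omega) h)
      · exact hr (mem_of_val huq 3 (by omega) h)

/-! #### a total dominating set of size 4 -/

lemma tds4 {n : ℕ} (hn : 13 ≤ n) :
    (myG n).IsTotalDomSet
      ↑({⟨1, by omega⟩, ⟨2, by omega⟩, ⟨3, by omega⟩, ⟨6, by omega⟩} : Finset (Fin n)) := by
  intro w
  have hdd : DD w.val 1 ∨ DD w.val 2 ∨ DD w.val 3 ∨ DD w.val 6 := by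
    rcases wclasses w.val with h | h | h | h | h | h | h | h | h | h | h <;>
      first
        | exact Or.inl (DD_1 (by omega))
        | exact Or.inr (Or.inl (DD_2 (by omega)))
        | exact Or.inr (Or.inr (Or.inl (DD_3 (by omega))))
        | exact Or.inr (Or.inr (Or.inr (DD_6 (by omega))))
  rcases hdd with h | h | h | h
  · exact ⟨⟨1, by omega⟩, by simp, adj_of_DD w 1 (by omega) h⟩
  · exact ⟨⟨2, by omega⟩, by simp, adj_of_DD w 2 (by omega) h⟩
  · exact ⟨⟨3, by omega⟩, by simp, adj_of_DD w 3 (by omega) h⟩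
  · exact ⟨⟨6, by omega⟩, by simp, adj_of_DD w 6 (by omega) h⟩

lemma tdn_eq {n : ℕ} (hn : 13 ≤ n) (hodd : n % 2 = 1) : (myG n).totalDomNum = 4 := by
  classical
  have htds := tds4 hn
  have hup : (myG n).totalDomNum ≤ 4 :=
    le_trans (tdn_le_card _ _ htds) (card_le_four _ _ _ _)
  have hne : {k : ℕ | ∃ S : Finset (Fin n), (myG n).IsTotalDomSet ↑S ∧ S.card = k}.Nonempty :=
    ⟨_, _, htds, rfl⟩
  obtain ⟨S, hS, hc⟩ := Nat.sInf_mem hne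
  have hlow := main_lower hn hodd S hS
  unfold totalDomNum at hup ⊢
  omega

/-! #### deletion of any vertex leaves a total dominating set of size at most 3 -/

lemma del_adj_of_DD {n : ℕ} (v : Fin n) (w : {u : Fin n // u ≠ v}) (a : ℕ) (ha : a < n)
    (hav : (⟨a, ha⟩ : Fin n) ≠ v) (h : DD w.1.val a) :
    ((myG n).deleteVert v).Adj w ⟨⟨a, ha⟩, hav⟩ := h

lemma del_le_of {n : ℕ} (v : Fin n) (a b c : ℕ) (ha : a < n) (hb : b < n) (hc : c < n)
    (hav : a ≠ v.val) (hbv : b ≠ v.val) (hcv : c ≠ v.val)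
    (hdom : ∀ w : ℕ, w < n → w ≠ v.val → (DD w a ∨ DD w b ∨ DD w c)) :
    ((myG n).deleteVert v).totalDomNum ≤ 3 := by
  classical
  refine le_trans (tdn_le_card _
    ({⟨⟨a, ha⟩, fin_ne_of_val _ _ hav⟩, ⟨⟨b, hb⟩, fin_ne_of_val _ _ hbv⟩,
      ⟨⟨c, hc⟩, fin_ne_of_val _ _ hcv⟩} : Finset {u : Fin n // u ≠ v}) ?_)
    (card_le_three _ _ _)
  intro w
  have hwv : w.1.val ≠ v.val := fun e => w.2 (Fin.ext e)
  rcases hdom w.1.val w.1.isLt hwv with h | h | h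
  · exact ⟨⟨⟨a, ha⟩, fin_ne_of_val _ _ hav⟩, by simp,
      del_adj_of_DD v w a ha (fin_ne_of_val _ _ hav) h⟩
  · exact ⟨⟨⟨b, hb⟩, fin_ne_of_val _ _ hbv⟩, by simp,
      del_adj_of_DD v w b hb (fin_ne_of_val _ _ hbv) h⟩
  · exact ⟨⟨⟨c, hc⟩, fin_ne_of_val _ _ hcv⟩, by simp,
      del_adj_of_DD v w c hc (fin_ne_of_val _ _ hcv) h⟩

lemma del_le {n : ℕ} (hn : 13 ≤ n) (hodd : n % 2 = 1) (v : Fin n) :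
    ((myG n).deleteVert v).totalDomNum ≤ 3 := by
  have hv := v.isLt
  have hcases : v.val = 0 ∨ v.val = 1 ∨ v.val = 2 ∨ v.val = 3 ∨ v.val = 4 ∨ v.val = 5 ∨
      v.val = 6 ∨ v.val = 7 ∨ v.val = 8 ∨ (9 ≤ v.val ∧ v.val % 2 = 1) ∨
      (v.val = 10) ∨ (11 ≤ v.val ∧ v.val % 2 = 0) := by omega
  rcases hcases with h | h | h | h | h | h | h | h | h | h | h | h
  · -- v = h : {p, q, r}
    refine del_le_of v 1 2 3 (by omega) (by omega) (by omega) (by omega) (by omega) (by omega) ?_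
    intro w hw hwv
    rcases wclasses w with hc | hc | hc | hc | hc | hc | hc | hc | hc | hc | hc <;>
      first
        | exact Or.inl (DD_1 (by omega))
        | exact Or.inr (Or.inl (DD_2 (by omega)))
        | exact Or.inr (Or.inr (DD_3 (by omega)))
  · -- v = p : {0, 3, 10}
    refine del_le_of v 0 3 10 (by omega) (by omega) (by omega) (by omega) (by omega) (by omega) ?_
    intro w hw hwv
    rcases wclasses w with hc | hc | hc | hc | hc | hc | hc | hc | hc | hc | hc <;>
      first
        | exact Or.inl (DD_0 (by omega))
        | exact Or.inr (Or.inl (DD_3 (by omega)))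
        | exact Or.inr (Or.inr (DD_even (by omega) (by omega) (by omega)))
  · -- v = q : {0, 9, 10}
    refine del_le_of v 0 9 10 (by omega) (by omega) (by omega) (by omega) (by omega) (by omega) ?_
    intro w hw hwv
    rcases wclasses w with hc | hc | hc | hc | hc | hc | hc | hc | hc | hc | hc <;>
      first
        | exact Or.inl (DD_0 (by omega))
        | exact Or.inr (Or.inl (DD_odd (by omega) (by omega) (by omega)))
        | exact Or.inr (Or.inr (DD_even (by omega) (by omega) (by omega)))
  · -- v = r : {0, 1, 9}
    refine del_le_of v 0 1 9 (by omega) (by omega) (by omega) (by omega) (by omega) (by omega) ?_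
    intro w hw hwv
    rcases wclasses w with hc | hc | hc | hc | hc | hc | hc | hc | hc | hc | hc <;>
      first
        | exact Or.inl (DD_0 (by omega))
        | exact Or.inr (Or.inl (DD_1 (by omega)))
        | exact Or.inr (Or.inr (DD_odd (by omega) (by omega) (by omega)))
  · -- v = s1 : {3, 5, 6}
    refine del_le_of v 3 5 6 (by omega) (by omega) (by omega) (by omega) (by omega) (by omega) ?_
    intro w hw hwv
    rcases wclasses w with hc | hc | hc | hc | hc | hc | hc | hc | hc | hc | hc <;>
      first
        | exact Or.inl (DD_3 (by omega))
        | exact Or.inr (Or.inl (DD_5 (by omega)))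
        | exact Or.inr (Or.inr (DD_6 (by omega)))
  · -- v = s2 : {3, 4, 7}
    refine del_le_of v 3 4 7 (by omega) (by omega) (by omega) (by omega) (by omega) (by omega) ?_
    intro w hw hwv
    rcases wclasses w with hc | hc | hc | hc | hc | hc | hc | hc | hc | hc | hc <;>
      first
        | exact Or.inl (DD_3 (by omega))
        | exact Or.inr (Or.inl (DD_4 (by omega)))
        | exact Or.inr (Or.inr (DD_7 (by omega)))
  · -- v = t1 : {1, 4, 10}
    refine del_le_of v 1 4 10 (by omega) (by omega) (by omega) (by omega) (by omega) (by omega) ?_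
    intro w hw hwv
    rcases wclasses w with hc | hc | hc | hc | hc | hc | hc | hc | hc | hc | hc <;>
      first
        | exact Or.inl (DD_1 (by omega))
        | exact Or.inr (Or.inl (DD_4 (by omega)))
        | exact Or.inr (Or.inr (DD_even (by omega) (by omega) (by omega)))
  · -- v = t2 : {1, 5, 10}
    refine del_le_of v 1 5 10 (by omega) (by omega) (by omega) (by omega) (by omega) (by omega) ?_
    intro w hw hwv
    rcases wclasses w with hc | hc | hc | hc | hc | hc | hc | hc | hc | hc | hc <;>
      first
        | exact Or.inl (DD_1 (by omega))
        | exact Or.inr (Or.inl (DD_5 (by omega)))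
        | exact Or.inr (Or.inr (DD_even (by omega) (by omega) (by omega)))
  · -- v = t3 : {1, 5, 6}
    refine del_le_of v 1 5 6 (by omega) (by omega) (by omega) (by omega) (by omega) (by omega) ?_
    intro w hw hwv
    rcases wclasses w with hc | hc | hc | hc | hc | hc | hc | hc | hc | hc | hc <;>
      first
        | exact Or.inl (DD_1 (by omega))
        | exact Or.inr (Or.inl (DD_5 (by omega)))
        | exact Or.inr (Or.inr (DD_6 (by omega)))
  · -- v = x_i : {3, 4, v+1}
    refine del_le_of v 3 4 (v.val + 1) (by omega) (by omega) (by omega) (by omega) (by omega)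
      (by omega) ?_
    intro w hw hwv
    rcases wclasses w with hc | hc | hc | hc | hc | hc | hc | hc | hc | hc | hc <;>
      first
        | exact Or.inl (DD_3 (by omega))
        | exact Or.inr (Or.inl (DD_4 (by omega)))
        | exact Or.inr (Or.inr (DD_even (by omega) (by omega) (by omega)))
  · -- v = y_1 = 10 : {1, 9, 12}
    refine del_le_of v 1 9 12 (by omega) (by omega) (by omega) (by omega) (by omega) (by omega) ?_
    intro w hw hwv
    rcases wclasses w with hc | hc | hc | hc | hc | hc | hc | hc | hc | hc | hc <;>
      first
        | exact Or.inl (DD_1 (by omega))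
        | exact Or.inr (Or.inl (DD_odd (by omega) (by omega) (by omega)))
        | exact Or.inr (Or.inr (DD_even (by omega) (by omega) (by omega)))
  · -- v = y_i, v ≥ 12 : {1, v-1, 10}
    obtain ⟨u, hu⟩ : ∃ u, v.val = u + 1 := ⟨v.val - 1, by omega⟩
    refine del_le_of v 1 u 10 (by omega) (by omega) (by omega) (by omega) (by omega) (by omega) ?_
    intro w hw hwv
    rcases wclasses w with hc | hc | hc | hc | hc | hc | hc | hc | hc | hc | hc <;>
      first
        | exact Or.inl (DD_1 (by omega))
        | exact Or.inr (Or.inl (DD_odd (by omega) (by omega) (by omega)))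
        | exact Or.inr (Or.inr (DD_even (by omega) (by omega) (by omega)))

/-! #### degrees -/

lemma deg_le_of {n : ℕ} (hn : 13 ≤ n) (v : Fin n) (k1 k2 k3 : ℕ)
    (h1 : k1 < n) (h2 : k2 < n) (h3 : k3 < n)
    (hv1 : v.val ≠ k1) (hv2 : v.val ≠ k2) (hv3 : v.val ≠ k3)
    (h12 : k1 ≠ k2) (h13 : k1 ≠ k3) (h23 : k2 ≠ k3)
    (hna : ∀ u : Fin n, (myG n).Adj v u → u.val ≠ k1 ∧ u.val ≠ k2 ∧ u.val ≠ k3) :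
    (myG n).degree v ≤ n - 4 := by
  classical
  have hsub : (myG n).neighborFinset v ⊆
      Finset.univ \ ({v, ⟨k1, h1⟩, ⟨k2, h2⟩, ⟨k3, h3⟩} : Finset (Fin n)) := by
    intro u hu
    rw [SimpleGraph.mem_neighborFinset] at hu
    obtain ⟨e1, e2, e3⟩ := hna u hu
    simp only [Finset.mem_sdiff, Finset.mem_univ, true_and, Finset.mem_insert,
      Finset.mem_singleton, not_or]
    exact ⟨fun e => ((myG n).ne_of_adj hu) e.symm,
      fun e => e1 (congrArg Fin.val e),
      fun e => e2 (congrArg Fin.val e),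
      fun e => e3 (congrArg Fin.val e)⟩
  have hBcard : ({v, ⟨k1, h1⟩, ⟨k2, h2⟩, ⟨k3, h3⟩} : Finset (Fin n)).card = 4 := by
    rw [Finset.card_insert_of_notMem, Finset.card_insert_of_notMem,
        Finset.card_insert_of_notMem, Finset.card_singleton]
    · simp only [Finset.mem_singleton]
      exact fin_ne_of_val _ _ h23
    · simp only [Finset.mem_insert, Finset.mem_singleton, not_or]
      exact ⟨fin_ne_of_val _ _ h12, fin_ne_of_val _ _ h13⟩
    · simp only [Finset.mem_insert, Finset.mem_singleton, not_or]
      exact ⟨fin_ne_of_val _ _ hv1, fin_ne_of_val _ _ hv2, fin_ne_of_val _ _ hv3⟩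
  have hc := Finset.card_le_card hsub
  rw [Finset.card_sdiff_of_subset (Finset.subset_univ _), Finset.card_univ, Fintype.card_fin, hBcard] at hc
  calc (myG n).degree v = ((myG n).neighborFinset v).card :=
        ((myG n).card_neighborFinset_eq_degree v).symm
    _ ≤ n - 4 := hc

lemma deg_hub {n : ℕ} (hn : 13 ≤ n) : (myG n).degree (⟨0, by omega⟩ : Fin n) = n - 4 := by
  classical
  have hset : (myG n).neighborFinset (⟨0, by omega⟩ : Fin n) =
      Finset.univ \ ({⟨0, by omega⟩, ⟨1, by omega⟩, ⟨2, by omega⟩, ⟨3, by omega⟩} :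
        Finset (Fin n)) := by
    ext u
    rw [SimpleGraph.mem_neighborFinset]
    simp only [Finset.mem_sdiff, Finset.mem_univ, true_and, Finset.mem_insert,
      Finset.mem_singleton, not_or]
    constructor
    · intro hu
      have hu' : (0:ℕ) ≠ u.val ∧ (FF 0 u.val ∨ FF u.val 0) := hu
      have h4 : 4 ≤ u.val := by unfold FF at hu'; omega
      exact ⟨fun e => by have : u.val = 0 := congrArg Fin.val e; omega,
        fun e => by have : u.val = 1 := congrArg Fin.val e; omega,
        fun e => by have : u.val = 2 := congrArg Fin.val e; omega,
        fun e => by have : u.val = 3 := congrArg Fin.val e; omega⟩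
    · rintro ⟨e0, e1, e2, e3⟩
      have n0 : u.val ≠ 0 := fun h => e0 (Fin.ext h)
      have n1 : u.val ≠ 1 := fun h => e1 (Fin.ext h)
      have n2 : u.val ≠ 2 := fun h => e2 (Fin.ext h)
      have n3 : u.val ≠ 3 := fun h => e3 (Fin.ext h)
      exact (⟨by omega, Or.inl (Or.inl ⟨rfl, by omega⟩)⟩ :
        (0:ℕ) ≠ u.val ∧ (FF 0 u.val ∨ FF u.val 0))
  have hBcard : ({⟨0, by omega⟩, ⟨1, by omega⟩, ⟨2, by omega⟩, ⟨3, by omega⟩} :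
      Finset (Fin n)).card = 4 := by
    rw [Finset.card_insert_of_notMem, Finset.card_insert_of_notMem,
        Finset.card_insert_of_notMem, Finset.card_singleton]
    · simp only [Finset.mem_singleton]
      exact fin_ne_of_val _ _ (show (2:ℕ) ≠ 3 by omega)
    · simp only [Finset.mem_insert, Finset.mem_singleton, not_or]
      exact ⟨fin_ne_of_val _ _ (show (1:ℕ) ≠ 2 by omega),
        fin_ne_of_val _ _ (show (1:ℕ) ≠ 3 by omega)⟩
    · simp only [Finset.mem_insert, Finset.mem_singleton, not_or]
      exact ⟨fin_ne_of_val _ _ (show (0:ℕ) ≠ 1 by omega),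
        fin_ne_of_val _ _ (show (0:ℕ) ≠ 2 by omega),
        fin_ne_of_val _ _ (show (0:ℕ) ≠ 3 by omega)⟩
  calc (myG n).degree (⟨0, by omega⟩ : Fin n)
      = ((myG n).neighborFinset (⟨0, by omega⟩ : Fin n)).card :=
        ((myG n).card_neighborFinset_eq_degree _).symm
    _ = n - 4 := by
        rw [hset, Finset.card_sdiff_of_subset (Finset.subset_univ _), Finset.card_univ,
          Fintype.card_fin, hBcard]

lemma two_le_deg_of {n : ℕ} (v : Fin n) (a b : ℕ) (ha : a < n) (hb : b < n) (hab : a ≠ b)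
    (h1 : DD v.val a) (h2 : DD v.val b) : 2 ≤ (myG n).degree v := by
  classical
  have hsub : ({⟨a, ha⟩, ⟨b, hb⟩} : Finset (Fin n)) ⊆ (myG n).neighborFinset v := by
    intro u hu
    simp only [Finset.mem_insert, Finset.mem_singleton] at hu
    rw [SimpleGraph.mem_neighborFinset]
    rcases hu with rfl | rfl
    · exact adj_of_DD v a ha h1
    · exact adj_of_DD v b hb h2
  have hc2 : ({⟨a, ha⟩, ⟨b, hb⟩} : Finset (Fin n)).card = 2 :=
    Finset.card_pair (fin_ne_of_val _ _ hab)
  calc 2 = ({⟨a, ha⟩, ⟨b, hb⟩} : Finset (Fin n)).card := hc2.symm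
    _ ≤ ((myG n).neighborFinset v).card := Finset.card_le_card hsub
    _ = (myG n).degree v := (myG n).card_neighborFinset_eq_degree v

lemma two_le_deg {n : ℕ} (hn : 13 ≤ n) (v : Fin n) : 2 ≤ (myG n).degree v := by
  have hv := v.isLt
  have hcases : v.val = 0 ∨ v.val = 1 ∨ v.val = 2 ∨ v.val = 3 ∨
      (v.val = 4 ∨ v.val = 5 ∨ (9 ≤ v.val ∧ v.val % 2 = 1)) ∨
      (v.val = 6 ∨ v.val = 7 ∨ v.val = 8 ∨ (9 ≤ v.val ∧ v.val % 2 = 0)) := by omega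
  rcases hcases with h | h | h | h | h | h
  · exact two_le_deg_of v 4 5 (by omega) (by omega) (by omega)
      (DD_4 (by omega)) (DD_5 (by omega))
  · exact two_le_deg_of v 2 4 (by omega) (by omega) (by omega)
      (DD_2 (by omega)) (DD_4 (by omega))
  · exact two_le_deg_of v 1 3 (by omega) (by omega) (by omega)
      (DD_1 (by omega)) (DD_3 (by omega))
  · exact two_le_deg_of v 2 6 (by omega) (by omega) (by omega)
      (DD_2 (by omega)) (DD_6 (by omega))
  · exact two_le_deg_of v 0 1 (by omega) (by omega) (by omega)
      (DD_0 (by omega)) (DD_1 (by omega))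
  · exact two_le_deg_of v 0 3 (by omega) (by omega) (by omega)
      (DD_0 (by omega)) (DD_3 (by omega))

lemma deg_le_all {n : ℕ} (hn : 13 ≤ n) (hodd : n % 2 = 1) (v : Fin n) :
    (myG n).degree v ≤ n - 4 := by
  have hv := v.isLt
  have hcases : v.val = 0 ∨ v.val = 1 ∨ v.val = 2 ∨ v.val = 3 ∨ v.val = 4 ∨ v.val = 5 ∨
      v.val = 6 ∨ v.val = 7 ∨ v.val = 8 ∨ (9 ≤ v.val ∧ v.val % 2 = 1) ∨
      (9 ≤ v.val ∧ v.val % 2 = 0) := by omega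
  have hadj : ∀ u : Fin n, (myG n).Adj v u →
      (v.val ≠ u.val ∧ (FF v.val u.val ∨ FF u.val v.val)) := fun u hu => hu
  rcases hcases with h | h | h | h | h | h | h | h | h | h | h
  · exact deg_le_of hn v 1 2 3 (by omega) (by omega) (by omega) (by omega) (by omega) (by omega)
      (by omega) (by omega) (by omega)
      (fun u hu => by have h' := hadj u hu; unfold FF at h'; omega)
  · exact deg_le_of hn v 0 3 6 (by omega) (by omega) (by omega) (by omega) (by omega) (by omega)
      (by omega) (by omega) (by omega)
      (fun u hu => by have h' := hadj u hu; unfold FF at h'; omega)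
  · exact deg_le_of hn v 0 4 5 (by omega) (by omega) (by omega) (by omega) (by omega) (by omega)
      (by omega) (by omega) (by omega)
      (fun u hu => by have h' := hadj u hu; unfold FF at h'; omega)
  · exact deg_le_of hn v 0 1 4 (by omega) (by omega) (by omega) (by omega) (by omega) (by omega)
      (by omega) (by omega) (by omega)
      (fun u hu => by have h' := hadj u hu; unfold FF at h'; omega)
  · exact deg_le_of hn v 2 3 5 (by omega) (by omega) (by omega) (by omega) (by omega) (by omega)
      (by omega) (by omega) (by omega)
      (fun u hu => by have h' := hadj u hu; unfold FF at h'; omega)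
  · exact deg_le_of hn v 2 3 4 (by omega) (by omega) (by omega) (by omega) (by omega) (by omega)
      (by omega) (by omega) (by omega)
      (fun u hu => by have h' := hadj u hu; unfold FF at h'; omega)
  · exact deg_le_of hn v 1 2 4 (by omega) (by omega) (by omega) (by omega) (by omega) (by omega)
      (by omega) (by omega) (by omega)
      (fun u hu => by have h' := hadj u hu; unfold FF at h'; omega)
  · exact deg_le_of hn v 1 2 5 (by omega) (by omega) (by omega) (by omega) (by omega) (by omega)
      (by omega) (by omega) (by omega)
      (fun u hu => by have h' := hadj u hu; unfold FF at h'; omega)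
  · exact deg_le_of hn v 1 2 4 (by omega) (by omega) (by omega) (by omega) (by omega) (by omega)
      (by omega) (by omega) (by omega)
      (fun u hu => by have h' := hadj u hu; unfold FF at h'; omega)
  · -- x generic : non-neighbours 2, 3, v+1
    exact deg_le_of hn v 2 3 (v.val + 1) (by omega) (by omega) (by omega) (by omega) (by omega)
      (by omega) (by omega) (by omega) (by omega)
      (fun u hu => by have h' := hadj u hu; have := u.isLt; unfold FF at h'; omega)
  · -- y generic : non-neighbours 1, 2, v-1
    obtain ⟨m, hm⟩ : ∃ m, v.val = m + 1 := ⟨v.val - 1, by omega⟩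
    exact deg_le_of hn v 1 2 m (by omega) (by omega) (by omega) (by omega) (by omega)
      (by omega) (by omega) (by omega) (by omega)
      (fun u hu => by have h' := hadj u hu; have := u.isLt; unfold FF at h'; omega)

lemma maxdeg {n : ℕ} (hn : 13 ≤ n) (hodd : n % 2 = 1) : (myG n).maxDegree = n - 4 := by
  classical
  apply le_antisymm
  · exact SimpleGraph.maxDegree_le_of_forall_degree_le _ _ (fun v => deg_le_all hn hodd v)
  · have h := SimpleGraph.degree_le_maxDegree (myG n) (⟨0, by omega⟩ : Fin n)
    rwa [deg_hub hn] at h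

lemma mindeg {n : ℕ} (hn : 13 ≤ n) : 2 ≤ (myG n).minDegree := by
  classical
  haveI : Nonempty (Fin n) := ⟨⟨0, by omega⟩⟩
  exact SimpleGraph.le_minDegree_of_forall_le_degree _ 2 (fun v => two_le_deg hn v)

/-- for every odd `Δ` with `Δ = 9` or `Δ ≥ 11`, there is a
`4`-`γₜ`-critical graph of order `Δ + 4` with maximum degree `Δ` and `δ(G) ≥ 2`. -/
theorem stmt16 (Δ : ℕ) (hodd : Odd Δ) (hΔ : Δ = 9 ∨ 11 ≤ Δ) :
    ∃ G : SimpleGraph (Fin (Δ + 4)),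
      G.IsTotalDomCritical ∧ G.totalDomNum = 4 ∧ G.maxDegree = Δ ∧ 2 ≤ G.minDegree := by
  obtain ⟨k, hk⟩ := hodd
  have hn : 13 ≤ Δ + 4 := by omega
  have hno : (Δ + 4) % 2 = 1 := by omega
  refine ⟨myG (Δ + 4), ⟨fun v => ?_, fun v _ => ?_⟩, tdn_eq hn hno, ?_, mindeg hn⟩
  · have := two_le_deg hn v
    omega
  · rw [tdn_eq hn hno]
    exact lt_of_le_of_lt (del_le hn hno v) (by norm_num)
  · rw [maxdeg hn hno]
    omega

end SimpleGraph
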